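/- Let q_u ∈ ℝ^{n_u}, Q_u ∈ 𝕊₊^{n_u}, u ∈ ℝ^{n_u} with u ∈ E(q_u, Q_u), and γ ∈ (0,1]. Define R_u := (1−γ) Q_u + (1 − 1/γ)(u − q_u)(u − q_u)ᵀ. If R_u is positive semidefinite, then the ellipsoid E(u, R_u) is contained in E(q_u, Q_u). -/

import Mathlib

open Matrix MeasureTheory

/-- The positive semidefinite square root of a positive semidefinite matrix
(the definition `Matrix.PosSemidef.sqrt` of the older Mathlib, since removed). -/
noncomputable def Matrix.PosSemidef.sqrt {n : Type*} [Fintype n] [DecidableEq n]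
    {A : Matrix n n ℝ} (hA : A.PosSemidef) : Matrix n n ℝ :=
  (hA.1.eigenvectorUnitary : Matrix n n ℝ) *
    diagonal (fun i => (Real.sqrt (hA.1.eigenvalues i) : ℝ)) *
    (star hA.1.eigenvectorUnitary : Matrix n n ℝ)

lemma Matrix.PosSemidef.posSemidef_sqrt {n : Type*} [Fintype n] [DecidableEq n]
    {A : Matrix n n ℝ} (hA : A.PosSemidef) : hA.sqrt.PosSemidef := by
  unfold Matrix.PosSemidef.sqrt
  have hD : (diagonal (fun i => (Real.sqrt (hA.1.eigenvalues i) : ℝ))).PosSemidef := by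
    rw [posSemidef_diagonal_iff]
    intro i
    exact Real.sqrt_nonneg _
  exact hD.mul_mul_conjTranspose_same (hA.1.eigenvectorUnitary : Matrix n n ℝ)

lemma Matrix.PosSemidef.sqrt_mul_self {n : Type*} [Fintype n] [DecidableEq n]
    {A : Matrix n n ℝ} (hA : A.PosSemidef) : hA.sqrt * hA.sqrt = A := by
  unfold Matrix.PosSemidef.sqrt
  set U := hA.1.eigenvectorUnitary with hU
  have hUU : (star U : Matrix n n ℝ) * (U : Matrix n n ℝ) = 1 := Unitary.coe_star_mul_self U
  have hDD : diagonal (fun i => (Real.sqrt (hA.1.eigenvalues i) : ℝ)) *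
      diagonal (fun i => (Real.sqrt (hA.1.eigenvalues i) : ℝ)) =
      diagonal (RCLike.ofReal ∘ hA.1.eigenvalues) := by
    rw [diagonal_mul_diagonal]
    congr 1
    funext i
    simp [Real.mul_self_sqrt (hA.eigenvalues_nonneg i)]
  calc (U : Matrix n n ℝ) * diagonal (fun i => (Real.sqrt (hA.1.eigenvalues i) : ℝ)) *
        (star U : Matrix n n ℝ) * ((U : Matrix n n ℝ) *
        diagonal (fun i => (Real.sqrt (hA.1.eigenvalues i) : ℝ)) * (star U : Matrix n n ℝ))
      = (U : Matrix n n ℝ) * (diagonal (fun i => (Real.sqrt (hA.1.eigenvalues i) : ℝ)) *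
        ((star U : Matrix n n ℝ) * (U : Matrix n n ℝ)) *
        diagonal (fun i => (Real.sqrt (hA.1.eigenvalues i) : ℝ))) * (star U : Matrix n n ℝ) := by
          simp only [Matrix.mul_assoc]
    _ = (U : Matrix n n ℝ) * diagonal (RCLike.ofReal ∘ hA.1.eigenvalues) *
        (star U : Matrix n n ℝ) := by
          rw [hUU, Matrix.mul_one, hDD]
    _ = A := by
          conv_rhs => rw [hA.1.spectral_theorem, Unitary.conjStarAlgAut_apply]

noncomputable def ellipsoid {m : ℕ} {Q : Matrix (Fin m) (Fin m) ℝ}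
    (q : Fin m → ℝ) (hQ : Q.PosSemidef) : Set (Fin m → ℝ) :=
  {x | ∃ v : Fin m → ℝ, v ⬝ᵥ v ≤ 1 ∧ x = q + hQ.sqrt.mulVec v}

noncomputable def frob {p q : ℕ} (M : Matrix (Fin p) (Fin q) ℝ) : ℝ :=
  Real.sqrt (Matrix.trace (Mᵀ * M))

lemma dot_cs {n : ℕ} (x y : Fin n → ℝ) : (x ⬝ᵥ y)^2 ≤ (x ⬝ᵥ x) * (y ⬝ᵥ y) := by
  simpa [dotProduct, sq] using Finset.sum_mul_sq_le_sq_mul_sq Finset.univ x y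

lemma dot_self_nonneg {n : ℕ} (x : Fin n → ℝ) : 0 ≤ x ⬝ᵥ x :=
  Finset.sum_nonneg fun i _ => mul_self_nonneg _

lemma dot_vecMulVec {n : ℕ} (z d : Fin n → ℝ) :
    z ⬝ᵥ (Matrix.vecMulVec d d).mulVec z = (z ⬝ᵥ d)^2 := by
  have h : (Matrix.vecMulVec d d).mulVec z = (d ⬝ᵥ z) • d := by
    ext i
    simp [Matrix.mulVec, Matrix.vecMulVec_apply, dotProduct, Finset.mul_sum, mul_assoc,
      mul_comm, mul_left_comm]
  rw [h, dotProduct_smul]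
  simp [sq, dotProduct_comm, mul_comm]

lemma key_ineq (γ a b c : ℝ) (hγ0 : 0 < γ) (hγ1 : γ ≤ 1) (hb : b^2 ≤ a)
    (hc : c^2 ≤ (1-γ)*a + (1-γ⁻¹)*b^2) : (b+c)^2 ≤ a := by
  rcases eq_or_lt_of_le hγ1 with h1 | h1
  · subst h1
    have : c^2 ≤ 0 := by simpa using hc
    have hc0 : c = 0 := by nlinarith [sq_nonneg c]
    simpa [hc0] using hb
  · have hg : γ * γ⁻¹ = 1 := mul_inv_cancel₀ hγ0.ne'
    nlinarith [sq_nonneg ((1-γ)*b - γ*c), mul_pos hγ0 (sub_pos.2 h1), sq_nonneg (b+c),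
      mul_le_mul_of_nonneg_left hc hγ0.le, sq_nonneg b, sq_nonneg c]

lemma symm_dot {n : ℕ} {P : Matrix (Fin n) (Fin n) ℝ} (hP : Pᵀ = P) (a b : Fin n → ℝ) :
    (P.mulVec a) ⬝ᵥ b = a ⬝ᵥ (P.mulVec b) := by
  nth_rewrite 1 [← hP]
  rw [Matrix.mulVec_transpose, ← Matrix.dotProduct_mulVec]

lemma herm_transpose {n : ℕ} {P : Matrix (Fin n) (Fin n) ℝ} (hP : P.IsHermitian) : Pᵀ = P := by
  ext i j
  rw [Matrix.transpose_apply]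
  nth_rewrite 1 [← hP]
  simp [Matrix.conjTranspose_apply]

lemma mem_range_of_dot {n : ℕ} {Q : Matrix (Fin n) (Fin n) ℝ} (hQ : Q.IsHermitian)
    (y : Fin n → ℝ) (h : ∀ z, Q.mulVec z = 0 → z ⬝ᵥ y = 0) :
    ∃ w, y = Q.mulVec w := by
  classical
  set T := Matrix.toEuclideanLin Q with hT
  have hadj : LinearMap.adjoint T = T := by
    rw [← Matrix.toEuclideanLin_conjTranspose_eq_adjoint, hQ]
  set K := LinearMap.ker T with hK
  have hle : LinearMap.range T ≤ Kᗮ := by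
    rintro _ ⟨a, rfl⟩
    intro z hz
    have h1 := LinearMap.adjoint_inner_left T a z
    rw [hadj] at h1
    rw [← h1, LinearMap.mem_ker.1 hz, inner_zero_left]
  have hdim : Module.finrank ℝ (LinearMap.range T) = Module.finrank ℝ Kᗮ := by
    have h1 := LinearMap.finrank_range_add_finrank_ker T
    rw [← hK] at h1
    have h2 := Submodule.finrank_add_finrank_orthogonal K
    omega
  have hreq : LinearMap.range T = Kᗮ := Submodule.eq_of_le_of_finrank_eq hle hdim
  have hy : ((WithLp.equiv 2 (Fin n → ℝ)).symm y) ∈ Kᗮ := by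
    intro z hz
    have hz' : Q.mulVec ((WithLp.equiv 2 (Fin n → ℝ)) z) = 0 := by
      have := LinearMap.mem_ker.1 hz
      rw [hT, Matrix.toEuclideanLin_apply] at this
      simpa using congrArg (WithLp.equiv 2 (Fin n → ℝ)) this
    have := h _ hz'
    simpa [real_inner_comm, PiLp.inner_apply, RCLike.inner_apply, dotProduct, mul_comm] using this
  rw [← hreq] at hy
  obtain ⟨a, ha⟩ := hy
  refine ⟨(WithLp.equiv 2 (Fin n → ℝ)) a, ?_⟩
  have := congrArg (WithLp.equiv 2 (Fin n → ℝ)) ha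
  rw [hT, Matrix.toEuclideanLin_apply] at this
  simpa using this.symm

lemma exists_sqrt_ball {n : ℕ} {Q : Matrix (Fin n) (Fin n) ℝ} (hQ : Q.PosSemidef)
    (y : Fin n → ℝ) (h : ∀ z, (z ⬝ᵥ y)^2 ≤ z ⬝ᵥ Q.mulVec z) :
    ∃ w, w ⬝ᵥ w ≤ 1 ∧ y = hQ.sqrt.mulVec w := by
  obtain ⟨w₂, hw₂⟩ := mem_range_of_dot hQ.1 y (fun z hz => by
    have h0 : z ⬝ᵥ Q.mulVec z = 0 := by rw [hz]; simp
    have := h z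
    nlinarith [sq_nonneg (z ⬝ᵥ y)])
  have hPsym : (hQ.sqrt)ᵀ = hQ.sqrt := herm_transpose hQ.posSemidef_sqrt.1
  have hQs : hQ.sqrt * hQ.sqrt = Q := hQ.sqrt_mul_self
  refine ⟨hQ.sqrt.mulVec w₂, ?_, ?_⟩
  · set s := (hQ.sqrt.mulVec w₂) ⬝ᵥ (hQ.sqrt.mulVec w₂) with hs
    have hseq : s = w₂ ⬝ᵥ Q.mulVec w₂ := by
      rw [hs, symm_dot hPsym, Matrix.mulVec_mulVec, hQs]
    have h2 := h w₂
    rw [← hw₂] at h2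
    have hsnn : 0 ≤ s := dot_self_nonneg _
    have hyy : w₂ ⬝ᵥ y = s := by rw [hw₂, ← hseq]
    rw [hyy] at h2
    nlinarith
  · rw [hw₂, Matrix.mulVec_mulVec, hQs]

theorem stmt3 {nu : ℕ} (qu u : Fin nu → ℝ) {Qu : Matrix (Fin nu) (Fin nu) ℝ}
    (hQu : Qu.PosSemidef) (hu : u ∈ ellipsoid qu hQu) (γ : ℝ) (hγ0 : 0 < γ) (hγ1 : γ ≤ 1)
    {Ru : Matrix (Fin nu) (Fin nu) ℝ}
    (hRdef : Ru = (1 - γ) • Qu + (1 - γ⁻¹) • Matrix.vecMulVec (u - qu) (u - qu))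
    (hRu : Ru.PosSemidef) :
    ellipsoid u hRu ⊆ ellipsoid qu hQu := by
  obtain ⟨w0, hw0, huq⟩ := hu
  intro x hx
  obtain ⟨v, hv, hxv⟩ := hx
  have hPsym : (hQu.sqrt)ᵀ = hQu.sqrt := herm_transpose hQu.posSemidef_sqrt.1
  have hRsym : (hRu.sqrt)ᵀ = hRu.sqrt := herm_transpose hRu.posSemidef_sqrt.1
  set y : Fin nu → ℝ := hQu.sqrt.mulVec w0 + hRu.sqrt.mulVec v with hy
  have hd : u - qu = hQu.sqrt.mulVec w0 := by rw [huq]; abel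
  have hxy : x = qu + y := by rw [hxv, huq, hy]; abel
  have hkey : ∀ z, (z ⬝ᵥ y)^2 ≤ z ⬝ᵥ Qu.mulVec z := by
    intro z
    set a := z ⬝ᵥ Qu.mulVec z with ha
    set b := z ⬝ᵥ hQu.sqrt.mulVec w0 with hb
    set c := z ⬝ᵥ hRu.sqrt.mulVec v with hc
    have haP : (hQu.sqrt.mulVec z) ⬝ᵥ (hQu.sqrt.mulVec z) = a := by
      rw [symm_dot hPsym, Matrix.mulVec_mulVec, hQu.sqrt_mul_self]
    have haR : (hRu.sqrt.mulVec z) ⬝ᵥ (hRu.sqrt.mulVec z) = z ⬝ᵥ Ru.mulVec z := by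
      rw [symm_dot hRsym, Matrix.mulVec_mulVec, hRu.sqrt_mul_self]
    have ha0 : 0 ≤ a := by rw [← haP]; exact dot_self_nonneg _
    have hzy : z ⬝ᵥ y = b + c := by rw [hy, dotProduct_add]
    have hbb : b^2 ≤ a := by
      have := dot_cs (hQu.sqrt.mulVec z) w0
      rw [haP] at this
      have h2 : b = (hQu.sqrt.mulVec z) ⬝ᵥ w0 := by rw [hb, symm_dot hPsym]
      calc b^2 = ((hQu.sqrt.mulVec z) ⬝ᵥ w0)^2 := by rw [h2]
        _ ≤ a * (w0 ⬝ᵥ w0) := this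
        _ ≤ a * 1 := mul_le_mul_of_nonneg_left hw0 ha0
        _ = a := mul_one a
    have hRexp : z ⬝ᵥ Ru.mulVec z = (1-γ)*a + (1-γ⁻¹)*b^2 := by
      rw [hRdef, Matrix.add_mulVec, dotProduct_add, Matrix.smul_mulVec,
        Matrix.smul_mulVec, dotProduct_smul, dotProduct_smul, hd, dot_vecMulVec]
      rw [ha, hb]
      simp only [smul_eq_mul]
    have hcc : c^2 ≤ (1-γ)*a + (1-γ⁻¹)*b^2 := by
      have := dot_cs (hRu.sqrt.mulVec z) v
      rw [haR, hRexp] at this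
      have h2 : c = (hRu.sqrt.mulVec z) ⬝ᵥ v := by rw [hc, symm_dot hRsym]
      have hRnn : 0 ≤ (1-γ)*a + (1-γ⁻¹)*b^2 := by
        rw [← hRexp, ← haR]; exact dot_self_nonneg _
      calc c^2 = ((hRu.sqrt.mulVec z) ⬝ᵥ v)^2 := by rw [h2]
        _ ≤ ((1-γ)*a + (1-γ⁻¹)*b^2) * (v ⬝ᵥ v) := this
        _ ≤ ((1-γ)*a + (1-γ⁻¹)*b^2) * 1 := mul_le_mul_of_nonneg_left hv hRnn
        _ = (1-γ)*a + (1-γ⁻¹)*b^2 := mul_one _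
    rw [hzy]
    exact key_ineq γ a b c hγ0 hγ1 hbb hcc
  obtain ⟨w, hw1, hw2⟩ := exists_sqrt_ball hQu y hkey
  exact ⟨w, hw1, by rw [hxy, hw2]⟩
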